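/- Let F be a monotone DNF Boolean formula over a finite variable set X with probability function p : X → [0,1], and let F' be a monotone DNF formula over a variable set X' that is a dissociation of F through a substitution θ : X' → X. Assume that for every variable X ∈ X, no two distinct dissociations X', X'' of X occur together in one prime implicant of F'. Then P[F] ≤ P[F'], where the probability function on X' is p'(X') = p(θ(X')). -/

import Mathlib

open scoped Classical

namespace PDB

noncomputable section

/-! ### Monotone DNF formulas over a finite variable set -/

/-- Probability that a monotone DNF formula (given by its finite set of implicants, each a
finite set of positive variables) is true, when each variable `x` is independently true with
probability `p x`. -/
def dnfProb {X : Type*} [Fintype X] (p : X → ℝ) (F : Finset (Finset X)) : ℝ :=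
  ∑ ω : X → Bool,
    (∏ x : X, if ω x = true then p x else 1 - p x) *
      (if ∃ T ∈ F, ∀ x ∈ T, ω x = true then 1 else 0)

/-- A prime implicant of a monotone DNF formula: a minimal implicant. -/
def IsPrimeImplicant {X : Type*} (F : Finset (Finset X)) (T : Finset X) : Prop :=
  T ∈ F ∧ ∀ S ∈ F, S ⊆ T → S = T

variable {A V dom : Type*}

/-! ### Self-join-free conjunctive queries: hierarchy and connectivity.
A self-join-free conjunctive query is given by its atoms: a family `atoms : A → Finset V`
assigning to each of the (pairwise distinct) relation symbols its finite set of variables;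
`H` denotes the set of head variables (treated as constants); all other variables are
existential.  A Boolean query has `H = ∅`. -/

/-- `at(x)`: the atoms among `S` that contain the variable `x`. -/
def atOf (atoms : A → Finset V) (S : Finset A) (x : V) : Finset A :=
  S.filter (fun i => x ∈ atoms i)

/-- The query consisting of the atoms `S` is hierarchical, with the variables in `H`
treated as constants (head variables): for any two existential variables, their atom sets
are comparable or disjoint. -/
def HierOn (atoms : A → Finset V) (S : Finset A) (H : Finset V) : Prop :=
  ∀ x : V, x ∉ H → ∀ y : V, y ∉ H →
    atOf atoms S x ⊆ atOf atoms S y ∨ atOf atoms S x ∩ atOf atoms S y = ∅ ∨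
      atOf atoms S y ⊆ atOf atoms S x

/-- A Boolean query (with all its atoms) is hierarchical. -/
def Hier [Fintype A] (atoms : A → Finset V) : Prop :=
  HierOn atoms Finset.univ ∅

/-- The set of atoms `S` is disconnected: it can be partitioned into two nonempty sets
sharing no variables. -/
def Disconn (atoms : A → Finset V) (S : Finset A) : Prop :=
  ∃ T : Finset A, T ⊆ S ∧ T.Nonempty ∧ (S \ T).Nonempty ∧
    ∀ i ∈ T, ∀ j ∈ S \ T, atoms i ∩ atoms j = ∅

/-- `T` is a connected component of the set of atoms `S`: a maximal connected subset. -/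
def IsComp (atoms : A → Finset V) (S T : Finset A) : Prop :=
  T ⊆ S ∧ T.Nonempty ∧ ¬ Disconn atoms T ∧
    ∀ U : Finset A, T ⊆ U → U ⊆ S → ¬ Disconn atoms U → U = T

/-- `xs` is a cut-set of the query with atoms `S`: a set of its variables whose removal
disconnects the query. -/
def IsCutSet (atoms : A → Finset V) (S : Finset A) (xs : Finset V) : Prop :=
  xs ⊆ S.sup atoms ∧ Disconn (fun i => atoms i \ xs) S

/-- a minimal cut-set (min-cut-set) -/
def MinCut (atoms : A → Finset V) (S : Finset A) (xs : Finset V) : Prop :=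
  IsCutSet atoms S xs ∧ ∀ ys : Finset V, ys ⊂ xs → ¬ IsCutSet atoms S ys

/-- the separator variables of a Boolean query: the variables occurring in every atom -/
def SepVars [Fintype A] [Fintype V] (atoms : A → Finset V) : Finset V :=
  Finset.univ.filter (fun x => ∀ i : A, x ∈ atoms i)

/-- the set of variables of a query -/
def varsOf [Fintype A] (atoms : A → Finset V) : Finset V :=
  Finset.univ.sup atoms

/-! ### Dissociations -/

/-- `Δ` is a dissociation of the query with atoms `atoms` and head variables `H`:
each atom receives extra existential variables of the query that it does not already
contain. -/
def IsDiss [Fintype A] (atoms : A → Finset V) (H : Finset V) (Δ : A → Finset V) : Prop :=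
  ∀ i : A, Δ i ⊆ (varsOf atoms \ H) \ atoms i

/-- the atoms of the dissociated query `q^Δ` -/
def dissAtoms (atoms Δ : A → Finset V) : A → Finset V := fun i => atoms i ∪ Δ i

/-- the partial dissociation order `Δ ≼ Δ'` -/
def dissLE (Δ Δ' : A → Finset V) : Prop := ∀ i : A, Δ i ⊆ Δ' i

/-- a safe dissociation: the dissociated query is hierarchical -/
def SafeDiss [Fintype A] (atoms : A → Finset V) (H : Finset V) (Δ : A → Finset V) : Prop :=
  IsDiss atoms H Δ ∧ HierOn (dissAtoms atoms Δ) Finset.univ H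

/-- a minimal safe dissociation: no smaller dissociation (in the order `≼`) is safe -/
def MinSafeDiss [Fintype A] (atoms : A → Finset V) (H : Finset V) (Δ : A → Finset V) : Prop :=
  SafeDiss atoms H Δ ∧
    ∀ Δ' : A → Finset V, SafeDiss atoms H Δ' → dissLE Δ' Δ → Δ' = Δ

/-! ### Tuple-independent probabilistic databases -/

/-- A tuple-independent probabilistic database for the query with atoms `atoms` over the
finite domain `dom`: each relation `i` is a finite set of tuples (functions from the
variables of the atom to the domain), each carrying a probability. -/
structure DB (atoms : A → Finset V) (dom : Type*) where
  tuples : ∀ i : A, Finset ({x // x ∈ atoms i} → dom)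
  prob : ∀ i : A, ({x // x ∈ atoms i} → dom) → ℝ

/-- all tuple probabilities lie in [0,1] -/
def DB.Valid {atoms : A → Finset V} (D : DB atoms dom) : Prop :=
  ∀ i : A, ∀ t ∈ D.tuples i, 0 ≤ D.prob i t ∧ D.prob i t ≤ 1

/-- the restriction of a valuation of all variables to the tuple format of atom `i` -/
def restrict (atoms : A → Finset V) (i : A) (ν : V → dom) : {x // x ∈ atoms i} → dom :=
  fun x => ν x.1

/-- restriction of a tuple to a smaller variable set -/
def restrictTup {xs ys : Finset V} (h : xs ⊆ ys) (t : {x // x ∈ ys} → dom) :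
    {x // x ∈ xs} → dom :=
  fun x => t ⟨x.1, h x.2⟩

/-- `P(q)`: the probability that the Boolean query with atoms `atoms` is true in a possible
world chosen by independently including each tuple `t` of `D` with probability `p(t)`. -/
def queryProb [Fintype A] (atoms : A → Finset V) (D : DB atoms dom) : ℝ :=
  ∑ W : ∀ i : A, {t // t ∈ D.tuples i} → Bool,
    (∏ i : A, ∏ t : {t // t ∈ D.tuples i},
        if W i t = true then D.prob i t.1 else 1 - D.prob i t.1) *
      (if ∃ ν : V → dom, ∀ i : A,
            ∃ h : restrict atoms i ν ∈ D.tuples i, W i ⟨restrict atoms i ν, h⟩ = true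
        then 1 else 0)

/-- The dissociated database `D^Δ`: relation `R_i^{ȳ_i}` contains one copy of each tuple
`t ∈ R_i` for every assignment of the added variables `ȳ_i` to domain values, with the same
probability as `t`. -/
def dissDB [Fintype dom] (atoms Δ : A → Finset V) (D : DB atoms dom) :
    DB (dissAtoms atoms Δ) dom where
  tuples i := Finset.univ.filter
    (fun t : {x // x ∈ dissAtoms atoms Δ i} → dom =>
      restrictTup (show atoms i ⊆ dissAtoms atoms Δ i from Finset.subset_union_left) t
        ∈ D.tuples i)
  prob i t :=
    D.prob i
      (restrictTup (show atoms i ⊆ dissAtoms atoms Δ i from Finset.subset_union_left) t)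

/-- `P(q^Δ)`: the probability of the dissociated query on the dissociated database. -/
def dissProb [Fintype A] [Fintype dom] (atoms Δ : A → Finset V) (D : DB atoms dom) : ℝ :=
  queryProb (dissAtoms atoms Δ) (dissDB atoms Δ D)

/-- The propagation score `ρ(q)`: the minimum of `P(q^Δ)` over all safe dissociations. -/
def propScore [Fintype A] [Fintype dom] (atoms : A → Finset V)
    (D : DB atoms dom) : ℝ :=
  sInf { r : ℝ | ∃ Δ : A → Finset V, SafeDiss atoms ∅ Δ ∧ r = dissProb atoms Δ D }

/-- the database with all tuple probabilities scaled by the factor `f` -/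
def scaleDB {atoms : A → Finset V} (D : DB atoms dom) (f : ℝ) : DB atoms dom where
  tuples := D.tuples
  prob i t := f * D.prob i t

/-- relation `i` is deterministic: all its tuples have probability 1 (otherwise it is
probabilistic) -/
def Deterministic {atoms : A → Finset V} (D : DB atoms dom) (i : A) : Prop :=
  ∀ t ∈ D.tuples i, D.prob i t = 1

/-- The lineage `F_{q,D}` of the Boolean query on `D`: the monotone DNF over the tuples of
`D` whose implicants correspond to the satisfying assignments of the query. -/
def lineage [Fintype A] [Fintype V] [Fintype dom] (atoms : A → Finset V)
    (D : DB atoms dom) :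
    Finset (Finset (Σ i : A, {x // x ∈ atoms i} → dom)) :=
  ((Finset.univ : Finset (V → dom)).filter
      (fun ν => ∀ i : A, restrict atoms i ν ∈ D.tuples i)).image
    (fun ν => Finset.univ.image
      (fun i : A => (⟨i, restrict atoms i ν⟩ : Σ i : A, {x // x ∈ atoms i} → dom)))

/-- The substitution `θ : D^Δ → D` mapping every tuple of a dissociated relation
`R_i^{ȳ_i}` to its projection onto the original variables of `R_i`. -/
def dissTupleMap (atoms Δ : A → Finset V) :
    (Σ i : A, {x // x ∈ dissAtoms atoms Δ i} → dom) →
      Σ i : A, {x // x ∈ atoms i} → dom :=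
  fun t =>
    ⟨t.1, restrictTup (show atoms t.1 ⊆ dissAtoms atoms Δ t.1 from Finset.subset_union_left)
      t.2⟩

/-! ### Functional dependencies -/

/-- `Determines Γ xs y`: the variable `y` is in the closure `xs⁺` of `xs` under the
functional dependencies `Γ`. -/
inductive Determines (Γ : Set (Finset V × V)) : Finset V → V → Prop
  | mem (xs : Finset V) (y : V) (h : y ∈ xs) : Determines Γ xs y
  | step (xs : Finset V) (fd : Finset V × V) (hfd : fd ∈ Γ)
      (hall : ∀ z ∈ fd.1, Determines Γ xs z) : Determines Γ xs fd.2

/-- The functional dependency `fd` is an FD on the attributes of relation `j` that holds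
in the database `D`. -/
def FDHolds (atoms : A → Finset V) (D : DB atoms dom) (j : A) (fd : Finset V × V) : Prop :=
  ∃ h1 : fd.1 ⊆ atoms j, ∃ h2 : fd.2 ∈ atoms j,
    ∀ t ∈ D.tuples j, ∀ t' ∈ D.tuples j,
      (∀ v : V, ∀ hv : v ∈ fd.1, t ⟨v, h1 hv⟩ = t' ⟨v, h1 hv⟩) →
        t ⟨fd.2, h2⟩ = t' ⟨fd.2, h2⟩

/-! ### Query plans -/

/-- Query plans: atoms, duplicate-eliminating projections (given by the retained head
variables), and k-ary natural joins. -/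
inductive Plan (A V : Type*) where
  | atom : A → Plan A V
  | proj : Finset V → Plan A V → Plan A V
  | join : List (Plan A V) → Plan A V

namespace Plan

/-- the head variables of a plan -/
def hvar (atoms : A → Finset V) : Plan A V → Finset V
  | .atom i => atoms i
  | .proj hv _ => hv
  | .join Ps => Ps.attach.foldr (fun P acc => hvar atoms P.1 ∪ acc) ∅
decreasing_by
  all_goals simp_wf
  all_goals try have := List.sizeOf_lt_of_mem P.2
  all_goals omega

/-- the multiset of atoms used by a plan -/
def atomsOf : Plan A V → Multiset A
  | .atom i => {i}
  | .proj _ P => atomsOf P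
  | .join Ps => Ps.attach.foldr (fun P acc => atomsOf P.1 + acc) 0
decreasing_by
  all_goals simp_wf
  all_goals try have := List.sizeOf_lt_of_mem P.2
  all_goals omega

def isProj : Plan A V → Prop
  | .proj _ _ => True
  | _ => False

def isJoin : Plan A V → Prop
  | .join _ => True
  | _ => False

/-- structural well-formedness: projections only retain available variables, joins are at
least binary, and joins and projections alternate -/
def WF (atoms : A → Finset V) : Plan A V → Prop
  | .atom _ => True
  | .proj hv P => hv ⊆ hvar atoms P ∧ ¬ isProj P ∧ WF atoms P
  | .join Ps => 2 ≤ Ps.length ∧ ∀ P ∈ Ps, ¬ isJoin P ∧ WF atoms P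
decreasing_by
  all_goals simp_wf
  all_goals try rename_i h; try have := List.sizeOf_lt_of_mem h
  all_goals omega

/-- a safe plan: at every join, all subplans have the same head variables -/
def Safe (atoms : A → Finset V) : Plan A V → Prop
  | .atom _ => True
  | .proj _ P => Safe atoms P
  | .join Ps => (∀ P ∈ Ps, Safe atoms P) ∧
      ∀ P ∈ Ps, ∀ Q ∈ Ps, hvar atoms P = hvar atoms Q
decreasing_by
  all_goals simp_wf
  all_goals try rename_i h; try have := List.sizeOf_lt_of_mem h
  all_goals omega

/-- `P` is a (well-formed) query plan for the query with atoms `atoms` and head variables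
`H`: it uses every atom exactly once and its output head variables are exactly `H`
(for a Boolean query, `H = ∅`, i.e. all existential variables are projected away). -/
def IsPlanFor [Fintype A] (atoms : A → Finset V) (H : Finset V) (P : Plan A V) : Prop :=
  WF atoms P ∧ atomsOf P = (Finset.univ : Finset A).val ∧ hvar atoms P = H

/-- the join variables: the union of the head variables of a list of subplans -/
def joinVars (atoms : A → Finset V) (Ps : List (Plan A V)) : Finset V :=
  (Ps.map (hvar atoms)).foldr (· ∪ ·) ∅

/-- Identification of plans up to join order, flattening of nested joins, and removal of
trivial (identity) projections. -/
inductive Equiv (atoms : A → Finset V) : Plan A V → Plan A V → Prop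
  | refl (P) : Equiv atoms P P
  | symm {P Q} : Equiv atoms P Q → Equiv atoms Q P
  | trans {P Q R} : Equiv atoms P Q → Equiv atoms Q R → Equiv atoms P R
  | projCongr (hv) {P Q} : Equiv atoms P Q → Equiv atoms (.proj hv P) (.proj hv Q)
  | joinCongr {Ps Qs} : List.Forall₂ (Equiv atoms) Ps Qs →
      Equiv atoms (.join Ps) (.join Qs)
  | joinPerm {Ps Qs} : Ps.Perm Qs → Equiv atoms (.join Ps) (.join Qs)
  | joinFlatten (Ps Qs Rs) :
      Equiv atoms (.join (Ps ++ .join Qs :: Rs)) (.join (Ps ++ Qs ++ Rs))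
  | projTriv {P} (hv) (h : hv = hvar atoms P) : Equiv atoms (.proj hv P) P

/-- The extensional score semantics of a plan evaluated on the database `D`: output tuples
are represented by total valuations `ν : V → dom` (only the values on the head variables
matter; duplicates are represented canonically by the default value `d₀` outside the head
variables).  Joins multiply scores, and duplicate-eliminating projections combine the
scores `s_1, …, s_n` of the tuples projecting to a common output tuple to
`1 - ∏ (1 - s_i)`. -/
def score [Fintype V] [Fintype dom] (atoms : A → Finset V) (D : DB atoms dom) (d₀ : dom) :
    Plan A V → (V → dom) → ℝ
  | .atom i, ν =>
      if restrict atoms i ν ∈ D.tuples i then D.prob i (restrict atoms i ν) else 0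
  | .proj hv P, ν =>
      1 - ∏ μ ∈ Finset.univ.filter (fun μ : V → dom =>
            (∀ v : V, v ∉ hvar atoms P → μ v = d₀) ∧ ∀ v ∈ hv, μ v = ν v),
          (1 - score atoms D d₀ P μ)
  | .join Ps, ν => (Ps.attach.map (fun P => score atoms D d₀ P.1 ν)).prod
decreasing_by
  all_goals simp_wf
  all_goals try have := List.sizeOf_lt_of_mem P.2
  all_goals omega

/-- the score of a Boolean plan -/
def bscore [Fintype V] [Fintype dom] [Inhabited dom] (atoms : A → Finset V)
    (D : DB atoms dom) (P : Plan A V) : ℝ :=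
  score atoms D default P (fun _ => default)

/-- Dropping the dissociated variables from a plan (for a dissociated query) to obtain the
corresponding plan `P^Δ` for the original query: every projection list is restricted to
the variables actually available in the original query. -/
def eraseTo (atoms : A → Finset V) : Plan A V → Plan A V
  | .atom i => .atom i
  | .proj hv P => .proj (hv ∩ hvar atoms (eraseTo atoms P)) (eraseTo atoms P)
  | .join Ps => .join (Ps.attach.map (fun P => eraseTo atoms P.1))
decreasing_by
  all_goals simp_wf
  all_goals try have := List.sizeOf_lt_of_mem P.2
  all_goals omega

/-- The dissociation `Δ^P` corresponding to a plan `P`: for each join operator with join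
variables `JVar = ⋃_j HVar(P_j)`, every relation occurring in subplan `P_j` receives the
variables `JVar ∖ HVar(P_j)`. -/
def dissOf (atoms : A → Finset V) : Plan A V → A → Finset V
  | .atom _ => fun _ => ∅
  | .proj _ P => dissOf atoms P
  | .join Ps => fun i =>
      Ps.attach.foldr (fun P acc =>
        (if i ∈ atomsOf P.1 then
            (joinVars atoms Ps \ hvar atoms P.1) ∪ dissOf atoms P.1 i
          else ∅) ∪ acc) ∅
decreasing_by
  all_goals simp_wf
  all_goals try have := List.sizeOf_lt_of_mem P.2
  all_goals omega

end Plan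

/-- The recursive algorithm `MP` enumerating the minimal query plans of the query with
atom set `S` and head variables `H` (head variables are treated as constants):
* if the query has a single atom, return the projection of that atom onto the head
  variables;
* if the query (after removing the head variables) is disconnected, return any join of
  minimal plans of its connected components (each component keeping the head variables
  occurring in it);
* otherwise, for any minimal cut-set `ys` of the query minus its head variables, return
  the plan projecting `ys` away from any minimal plan of the query with head variables
  `H ∪ ys`. -/
inductive MPrel (atoms : A → Finset V) : Finset A → Finset V → Plan A V → Prop
  | single (i : A) (H : Finset V) : MPrel atoms {i} H (.proj H (.atom i))
  | disc (S : Finset A) (H : Finset V) (parts : List (Finset A)) (Ps : List (Plan A V))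
      (hdup : parts.Nodup) (hlen : 2 ≤ parts.length)
      (hparts : ∀ T : Finset A, T ∈ parts ↔ IsComp (fun i => atoms i \ H) S T)
      (hlen2 : parts.length = Ps.length)
      (hPs : ∀ n : ℕ, ∀ h1 : n < parts.length, ∀ h2 : n < Ps.length,
        MPrel atoms parts[n] (H ∩ (parts[n]).sup atoms) Ps[n]) :
      MPrel atoms S H (.join Ps)
  | conn (S : Finset A) (H : Finset V) (ys : Finset V) (P : Plan A V)
      (hcard : 2 ≤ S.card)
      (hconn : ¬ Disconn (fun i => atoms i \ H) S)
      (hcut : MinCut (fun i => atoms i \ H) S ys)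
      (hP : MPrel atoms S (H ∪ ys) P) :
      MPrel atoms S H (.proj H P)


/-! ### Auxiliary development for Statement 0 -/

section DnfAux

open Finset

variable {Y : Type*}

/-- satisfaction of a monotone DNF -/
def dnfSat (F : Finset (Finset Y)) (ω : Y → Bool) : Prop :=
  ∃ T ∈ F, ∀ x ∈ T, ω x = true

/-- indicator of satisfaction -/
def dnfInd (F : Finset (Finset Y)) (ω : Y → Bool) : ℝ :=
  if ∃ T ∈ F, ∀ x ∈ T, ω x = true then 1 else 0

lemma dnfInd_nonneg (F : Finset (Finset Y)) (ω : Y → Bool) : 0 ≤ dnfInd F ω := by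
  unfold dnfInd; split <;> norm_num

lemma dnfInd_le_one (F : Finset (Finset Y)) (ω : Y → Bool) : dnfInd F ω ≤ 1 := by
  unfold dnfInd; split <;> norm_num

lemma ite_prop_irrel {P Q : Prop} {i1 : Decidable P} {i2 : Decidable Q} (h : P ↔ Q) :
    @ite ℝ P i1 1 0 = @ite ℝ Q i2 1 0 := by
  by_cases hP : P
  · rw [if_pos hP, if_pos (h.1 hP)]
  · rw [if_neg hP, if_neg (fun hq => hP (h.2 hq))]

lemma dnfInd_pos {F : Finset (Finset Y)} {ω : Y → Bool} (h : dnfSat F ω) : dnfInd F ω = 1 := by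
  unfold dnfInd; split
  · rfl
  · exact absurd h (by assumption)

lemma dnfInd_neg {F : Finset (Finset Y)} {ω : Y → Bool} (h : ¬ dnfSat F ω) : dnfInd F ω = 0 := by
  unfold dnfInd; split
  · exact absurd (by assumption) h
  · rfl

lemma dnfSat_mono (F : Finset (Finset Y)) {ω ω' : Y → Bool}
    (h : ∀ y, ω y = true → ω' y = true) : dnfSat F ω → dnfSat F ω' :=
  fun ⟨T, hT, hall⟩ => ⟨T, hT, fun y hy => h y (hall y hy)⟩

lemma dnfProb_eq_ind {Y : Type*} [Fintype Y] (p : Y → ℝ) (F : Finset (Finset Y)) :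
    dnfProb p F = ∑ ω : Y → Bool,
      (∏ x : Y, if ω x = true then p x else 1 - p x) * dnfInd F ω := by
  unfold dnfProb dnfInd
  refine Finset.sum_congr rfl fun ω _ => ?_
  exact congrArg (fun r => (∏ x : Y, if ω x = true then p x else 1 - p x) * r)
    (ite_prop_irrel Iff.rfl)

lemma exists_prime_of_sat (F : Finset (Finset Y)) (ω : Y → Bool) (h : dnfSat F ω) :
    ∃ T, IsPrimeImplicant F T ∧ ∀ y ∈ T, ω y = true := by
  obtain ⟨T, hT, hall⟩ := h
  have hne : (F.filter (fun S => S ⊆ T)).Nonempty := ⟨T, by simp [hT]⟩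
  obtain ⟨m, hm, hmin⟩ : ∃ m ∈ F.filter (fun S => S ⊆ T),
      ∀ x ∈ F.filter (fun S => S ⊆ T), ¬ x < m := by
    obtain ⟨m, hm⟩ := Finset.exists_minimal hne
    exact ⟨m, hm.1, fun x hx hlt => lt_irrefl _ (lt_of_lt_of_le hlt (hm.2 hx hlt.le))⟩
  rw [Finset.mem_filter] at hm
  refine ⟨m, ⟨hm.1, fun S hS hSm => ?_⟩, fun y hy => hall y (hm.2 hy)⟩
  by_contra hne'
  exact hmin S (Finset.mem_filter.2 ⟨hS, hSm.trans hm.2⟩) (lt_of_le_of_ne hSm hne')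

lemma sum_pi_bool_prod {S : Type*} [Fintype S] [DecidableEq S] (f : S → Bool → ℝ) :
    ∑ ξ : S → Bool, ∏ s, f s (ξ s) = ∏ s, (f s true + f s false) := by
  classical
  have h := Finset.prod_univ_sum (fun _ : S => (Finset.univ : Finset Bool)) (fun s b => f s b)
  simp only [Fintype.piFinset_univ] at h
  rw [← h]
  exact Finset.prod_congr rfl fun s _ => by rw [Fintype.sum_bool]

end DnfAux

section DissAux

open Finset

variable {X X' : Type*} [Fintype X] [Fintype X']

/-- the weight of block `x` : independent copies if `x ∈ W`, else perfectly coupled copies -/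
def blockW (p : X → ℝ) (θ : X' → X) (W : Finset X) (x : X) (ω : X' → Bool) : ℝ :=
  if x ∈ W then
    ∏ x' ∈ Finset.univ.filter (fun x' => θ x' = x),
      (if ω x' = true then p (θ x') else 1 - p (θ x'))
  else
    p x * (if ∀ x' ∈ Finset.univ.filter (fun x' => θ x' = x), ω x' = true then 1 else 0)
      + (1 - p x) *
        (if ∀ x' ∈ Finset.univ.filter (fun x' => θ x' = x), ω x' = false then 1 else 0)

/-- the interpolated probability -/
def Qfun (p : X → ℝ) (θ : X' → X) (F' : Finset (Finset X')) (W : Finset X) : ℝ :=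
  ∑ ω : X' → Bool, (∏ x : X, blockW p θ W x ω) * dnfInd F' ω

lemma blockW_nonneg {p : X → ℝ} (hp : ∀ x : X, 0 ≤ p x ∧ p x ≤ 1) (θ : X' → X)
    (W : Finset X) (x : X) (ω : X' → Bool) : 0 ≤ blockW p θ W x ω := by
  unfold blockW
  split
  · refine Finset.prod_nonneg fun x' _ => ?_
    split
    · exact (hp _).1
    · linarith [(hp (θ x')).2]
  · have h1 := (hp x).1
    have h2 := (hp x).2
    apply add_nonneg <;> apply mul_nonneg
    · exact h1
    · split <;> norm_num
    · linarith
    · split <;> norm_num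

lemma blockW_congr {p : X → ℝ} {θ : X' → X} {W : Finset X} {y : X} {ω ω' : X' → Bool}
    (h : ∀ x', θ x' = y → ω x' = ω' x') :
    blockW p θ W y ω = blockW p θ W y ω' := by
  have hagree : ∀ x' ∈ Finset.univ.filter (fun x' => θ x' = y), ω x' = ω' x' :=
    fun x' hx' => h x' (by simpa using hx')
  have h2 : ∀ b : Bool,
      (∀ x' ∈ Finset.univ.filter (fun x' => θ x' = y), ω x' = b) ↔
      (∀ x' ∈ Finset.univ.filter (fun x' => θ x' = y), ω' x' = b) :=
    fun b => ⟨fun hh x' hx' => (hagree x' hx').symm.trans (hh x' hx'),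
      fun hh x' hx' => (hagree x' hx').trans (hh x' hx')⟩
  unfold blockW
  split
  · exact Finset.prod_congr rfl fun x' hx' => by rw [hagree x' hx']
  · rw [if_congr (h2 true) rfl rfl, if_congr (h2 false) rfl rfl]

/-- combination of an assignment on the fiber of `x` and one outside -/
def cmb (θ : X' → X) (x : X) (ξ : {x' : X' // θ x' = x} → Bool)
    (η : {x' : X' // ¬ θ x' = x} → Bool) : X' → Bool :=
  fun x' => if h : θ x' = x then ξ ⟨x', h⟩ else η ⟨x', h⟩

end DissAux

section DissMain

open Finset

variable {X X' : Type*} [Fintype X] [Fintype X']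

lemma Q_univ (p : X → ℝ) (θ : X' → X) (F' : Finset (Finset X')) :
    Qfun p θ F' Finset.univ = dnfProb (fun x' => p (θ x')) F' := by
  classical
  rw [dnfProb_eq_ind]
  unfold Qfun
  refine Finset.sum_congr rfl fun ω' _ => ?_
  congr 1
  have h1 : ∀ x : X, blockW p θ Finset.univ x ω' =
      ∏ x' ∈ Finset.univ.filter (fun x' => θ x' = x),
        (if ω' x' = true then p (θ x') else 1 - p (θ x')) := by
    intro x; unfold blockW; rw [if_pos (Finset.mem_univ x)]
  rw [Finset.prod_congr rfl fun x _ => h1 x]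
  exact Finset.prod_fiberwise Finset.univ θ _

lemma Q_empty (p : X → ℝ) (θ : X' → X) (F : Finset (Finset X)) (F' : Finset (Finset X'))
    (hsubst : F'.image (Finset.image θ) = F) :
    Qfun p θ F' ∅ = dnfProb p F := by
  classical
  have hsat : ∀ ω : X → Bool, dnfSat F' (fun x' => ω (θ x')) ↔ dnfSat F ω := by
    intro ω
    constructor
    · rintro ⟨T', hT', hall⟩
      refine ⟨T'.image θ, ?_, ?_⟩
      · rw [← hsubst]; exact Finset.mem_image_of_mem _ hT'
      · intro y hy
        obtain ⟨x', hx', rfl⟩ := Finset.mem_image.1 hy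
        exact hall x' hx'
    · rintro ⟨T, hT, hall⟩
      rw [← hsubst] at hT
      obtain ⟨T', hT', rfl⟩ := Finset.mem_image.1 hT
      exact ⟨T', hT', fun x' hx' => hall (θ x') (Finset.mem_image_of_mem θ hx')⟩
  have hprod : ∀ ω' : X' → Bool,
      (∏ x : X, blockW p θ (∅ : Finset X) x ω') =
      ∑ ω : X → Bool, (∏ x : X, if ω x = true then p x else 1 - p x) *
        (if ω' = (fun x' => ω (θ x')) then 1 else 0) := by
    intro ω'
    have key : (∑ ω : X → Bool, ∏ x : X,
        ((if ω x = true then p x else 1 - p x) *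
          (if ∀ x' ∈ Finset.univ.filter (fun x' => θ x' = x), ω' x' = ω x then 1 else 0)))
        = ∏ x : X,
          (((if (true : Bool) = true then p x else 1 - p x) *
            (if ∀ x' ∈ Finset.univ.filter (fun x' => θ x' = x), ω' x' = true then 1 else 0))
          + ((if (false : Bool) = true then p x else 1 - p x) *
            (if ∀ x' ∈ Finset.univ.filter (fun x' => θ x' = x), ω' x' = false then 1 else 0))) :=
      sum_pi_bool_prod (fun x b => (if b = true then p x else 1 - p x) *
        (if ∀ x' ∈ Finset.univ.filter (fun x' => θ x' = x), ω' x' = b then 1 else 0))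
    have hb : (∏ x : X, blockW p θ (∅ : Finset X) x ω') = ∏ x : X,
        (((if (true : Bool) = true then p x else 1 - p x) *
          (if ∀ x' ∈ Finset.univ.filter (fun x' => θ x' = x), ω' x' = true then 1 else 0))
        + ((if (false : Bool) = true then p x else 1 - p x) *
          (if ∀ x' ∈ Finset.univ.filter (fun x' => θ x' = x), ω' x' = false then 1 else 0))) := by
      refine Finset.prod_congr rfl fun x _ => ?_
      unfold blockW
      rw [if_neg (Finset.notMem_empty x)]
      norm_num
    rw [hb, ← key]
    refine Finset.sum_congr rfl fun ω _ => ?_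
    rw [Finset.prod_mul_distrib]
    congr 1
    by_cases h : ω' = fun x' => ω (θ x')
    · rw [if_pos h]
      subst h
      refine Finset.prod_eq_one fun x _ => ?_
      rw [if_pos]
      intro x' hx'
      have ht : θ x' = x := by simpa using hx'
      exact congrArg ω ht
    · rw [if_neg h]
      obtain ⟨x'₀, hx'₀⟩ : ∃ x', ω' x' ≠ ω (θ x') := Function.ne_iff.1 h
      refine Finset.prod_eq_zero (Finset.mem_univ (θ x'₀)) ?_
      rw [if_neg]
      intro hall
      exact hx'₀ (hall x'₀ (by simp))
  have hinner : ∀ ω : X → Bool,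
      (∑ ω' : X' → Bool, ((∏ x : X, if ω x = true then p x else 1 - p x) *
          (if ω' = (fun x' => ω (θ x')) then 1 else 0)) * dnfInd F' ω')
      = (∏ x : X, if ω x = true then p x else 1 - p x) * dnfInd F ω := by
    intro ω
    have h1 : ∀ ω' : X' → Bool, ((∏ x : X, if ω x = true then p x else 1 - p x) *
          (if ω' = (fun x' => ω (θ x')) then 1 else 0)) * dnfInd F' ω'
        = if ω' = (fun x' => ω (θ x'))
            then (∏ x : X, if ω x = true then p x else 1 - p x) * dnfInd F' ω' else 0 := by
      intro ω'
      by_cases h : ω' = (fun x' => ω (θ x')) <;> simp [h]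
    rw [Finset.sum_congr rfl fun ω' _ => h1 ω']
    rw [Finset.sum_ite_eq' Finset.univ (fun x' => ω (θ x'))
      (fun ω' => (∏ x : X, if ω x = true then p x else 1 - p x) * dnfInd F' ω')]
    rw [if_pos (Finset.mem_univ _)]
    congr 1
    unfold dnfInd
    exact ite_prop_irrel (hsat ω)
  unfold Qfun
  rw [dnfProb_eq_ind]
  have step1 : ∀ ω' : X' → Bool, (∏ x : X, blockW p θ (∅ : Finset X) x ω') * dnfInd F' ω' =
      ∑ ω : X → Bool, ((∏ x : X, if ω x = true then p x else 1 - p x) *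
        (if ω' = (fun x' => ω (θ x')) then 1 else 0)) * dnfInd F' ω' := by
    intro ω'; rw [hprod ω', Finset.sum_mul]
  rw [Finset.sum_congr rfl fun ω' _ => step1 ω', Finset.sum_comm]
  exact Finset.sum_congr rfl fun ω _ => hinner ω

lemma Q_step (p : X → ℝ) (hp : ∀ x : X, 0 ≤ p x ∧ p x ≤ 1) (θ : X' → X)
    (F' : Finset (Finset X'))
    (hprime : ∀ T' : Finset X', IsPrimeImplicant F' T' → Set.InjOn θ ↑T')
    (W : Finset X) (x : X) (hx : x ∉ W) :
    Qfun p θ F' W ≤ Qfun p θ F' (insert x W) := by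
  classical
  have hsum : ∀ W' : Finset X,
      Qfun p θ F' W' = ∑ η : {x' : X' // ¬ θ x' = x} → Bool,
        ∑ ξ : {x' : X' // θ x' = x} → Bool,
          (∏ y : X, blockW p θ W' y (cmb θ x ξ η)) * dnfInd F' (cmb θ x ξ η) := by
    intro W'
    have e1 := Equiv.sum_comp
      (Equiv.piEquivPiSubtypeProd (fun x' : X' => θ x' = x) (fun _ => Bool)).symm
      (fun ω : X' → Bool => (∏ y : X, blockW p θ W' y ω) * dnfInd F' ω)
    unfold Qfun
    rw [← e1, Fintype.sum_prod_type, Finset.sum_comm]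
    refine Finset.sum_congr rfl fun η _ => Finset.sum_congr rfl fun ξ _ => ?_
    have hc : (Equiv.piEquivPiSubtypeProd (fun x' : X' => θ x' = x) (fun _ => Bool)).symm
        (ξ, η) = cmb θ x ξ η := by
      funext x'
      simp only [Equiv.piEquivPiSubtypeProd_symm_apply, cmb]
    rw [hc]
  rw [hsum W, hsum (insert x W)]
  refine Finset.sum_le_sum fun η _ => ?_
  set g : ({x' : X' // θ x' = x} → Bool) → ℝ := fun ξ => dnfInd F' (cmb θ x ξ η) with hg
  set Rest : ℝ := ∏ y ∈ Finset.univ.erase x, blockW p θ W y (cmb θ x (fun _ => true) η)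
    with hRest
  have hRest0 : 0 ≤ Rest := Finset.prod_nonneg fun y _ => blockW_nonneg hp θ W y _
  have hoff : ∀ (ξ : {x' : X' // θ x' = x} → Bool) (x' : X') (h : ¬ θ x' = x),
      cmb θ x ξ η x' = η ⟨x', h⟩ := fun ξ x' h => dif_neg h
  have hrest : ∀ (W' : Finset X), (∀ y, y ≠ x → (y ∈ W' ↔ y ∈ W)) →
      ∀ (ξ : {x' : X' // θ x' = x} → Bool),
      (∏ y ∈ Finset.univ.erase x, blockW p θ W' y (cmb θ x ξ η)) = Rest := by
    intro W' hW' ξ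
    refine Finset.prod_congr rfl fun y hy => ?_
    have hyx : y ≠ x := Finset.ne_of_mem_erase hy
    have h1 : blockW p θ W' y (cmb θ x ξ η) = blockW p θ W y (cmb θ x ξ η) := by
      unfold blockW
      by_cases hmem : y ∈ W
      · rw [if_pos ((hW' y hyx).2 hmem), if_pos hmem]
      · rw [if_neg (fun hc => hmem ((hW' y hyx).1 hc)), if_neg hmem]
    rw [h1]
    refine blockW_congr fun x' hx' => ?_
    have hne : ¬ θ x' = x := by rw [hx']; exact hyx
    rw [hoff ξ x' hne, hoff _ x' hne]
  have hsplit : ∀ (W' : Finset X), (∀ y, y ≠ x → (y ∈ W' ↔ y ∈ W)) →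
      ∀ (ξ : {x' : X' // θ x' = x} → Bool),
      (∏ y : X, blockW p θ W' y (cmb θ x ξ η)) = blockW p θ W' x (cmb θ x ξ η) * Rest := by
    intro W' hW' ξ
    rw [← Finset.mul_prod_erase Finset.univ _ (Finset.mem_univ x), hrest W' hW' ξ]
  have hWiff : ∀ y, y ≠ x → (y ∈ W ↔ y ∈ W) := fun _ _ => Iff.rfl
  have hWiff' : ∀ y, y ≠ x → (y ∈ insert x W ↔ y ∈ W) := fun y hy => by
    simp [Finset.mem_insert, hy]
  have hcoupled : ∀ ξ : {x' : X' // θ x' = x} → Bool,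
      blockW p θ W x (cmb θ x ξ η) =
        p x * (if ξ = (fun _ => true) then 1 else 0)
          + (1 - p x) * (if ξ = (fun _ => false) then 1 else 0) := by
    intro ξ
    have hiff : ∀ b : Bool,
        (∀ x' ∈ Finset.univ.filter (fun x' => θ x' = x), cmb θ x ξ η x' = b) ↔
          (ξ = fun _ => b) := by
      intro b
      constructor
      · intro hh
        funext s
        have h1 := hh s.1 (by simp [s.2])
        rwa [show cmb θ x ξ η s.1 = ξ s from by
          simp only [cmb]; rw [dif_pos s.2]] at h1
      · rintro rfl x' hx'
        have ht : θ x' = x := by simpa using hx'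
        simp only [cmb]; rw [dif_pos ht]
    unfold blockW
    rw [if_neg hx, if_congr (hiff true) rfl rfl, if_congr (hiff false) rfl rfl]
  have hindep : ∀ ξ : {x' : X' // θ x' = x} → Bool,
      blockW p θ (insert x W) x (cmb θ x ξ η) =
        ∏ s : {x' : X' // θ x' = x}, (if ξ s = true then p x else 1 - p x) := by
    intro ξ
    unfold blockW
    rw [if_pos (Finset.mem_insert_self x W)]
    rw [Finset.prod_subtype (p := fun x' => θ x' = x)
      (Finset.univ.filter (fun x' => θ x' = x)) (fun x' => by simp)
      (fun x' => if cmb θ x ξ η x' = true then p (θ x') else 1 - p (θ x'))]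
    refine Finset.prod_congr rfl fun s _ => ?_
    have h1 : cmb θ x ξ η s.1 = ξ s := by simp only [cmb]; rw [dif_pos s.2]
    rw [h1, s.2]
  have hmono_up : ∀ ξ : {x' : X' // θ x' = x} → Bool,
      dnfSat F' (cmb θ x ξ η) → dnfSat F' (cmb θ x (fun _ => true) η) := by
    intro ξ
    refine dnfSat_mono F' fun x' hx' => ?_
    by_cases h : θ x' = x
    · simp only [cmb]; rw [dif_pos h]
    · rw [hoff _ x' h]
      rw [hoff ξ x' h] at hx'
      exact hx'
  have hmono_dn : dnfSat F' (cmb θ x (fun _ => false) η) →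
      ∀ ξ, dnfSat F' (cmb θ x ξ η) := by
    intro h0 ξ
    refine dnfSat_mono F' (fun x' hx' => ?_) h0
    by_cases h : θ x' = x
    · exfalso
      rw [show cmb θ x (fun _ => false) η x' = false from by
        simp only [cmb]; rw [dif_pos h]] at hx'
      exact Bool.false_ne_true hx'
    · rw [hoff ξ x' h]
      rw [hoff (fun _ => false) x' h] at hx'
      exact hx'
  have hival0 : ∀ ξ : {x' : X' // θ x' = x} → Bool,
      0 ≤ ∏ s : {x' : X' // θ x' = x}, (if ξ s = true then p x else 1 - p x) := by
    intro ξ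
    refine Finset.prod_nonneg fun s _ => ?_
    split
    · exact (hp x).1
    · linarith [(hp x).2]
  have hkey : (∑ ξ : {x' : X' // θ x' = x} → Bool,
        (p x * (if ξ = (fun _ => true) then 1 else 0)
          + (1 - p x) * (if ξ = (fun _ => false) then 1 else 0)) * g ξ)
      ≤ ∑ ξ : {x' : X' // θ x' = x} → Bool,
        (∏ s : {x' : X' // θ x' = x}, (if ξ s = true then p x else 1 - p x)) * g ξ := by
    have h1 : ∀ c : {x' : X' // θ x' = x} → Bool,
        (∑ ξ : {x' : X' // θ x' = x} → Bool, (if ξ = c then (1 : ℝ) else 0) * g ξ) = g c := by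
      intro c
      rw [Finset.sum_congr rfl (fun ξ _ => show (if ξ = c then (1 : ℝ) else 0) * g ξ
          = if ξ = c then g ξ else 0 from by by_cases h : ξ = c <;> simp [h])]
      rw [Finset.sum_ite_eq' Finset.univ c g]
      simp
    have hL : (∑ ξ : {x' : X' // θ x' = x} → Bool,
        (p x * (if ξ = (fun _ => true) then 1 else 0)
          + (1 - p x) * (if ξ = (fun _ => false) then 1 else 0)) * g ξ)
        = p x * g (fun _ => true) + (1 - p x) * g (fun _ => false) := by
      rw [← h1 (fun _ => true), ← h1 (fun _ => false), Finset.mul_sum, Finset.mul_sum,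
        ← Finset.sum_add_distrib]
      exact Finset.sum_congr rfl fun ξ _ => by ring
    rw [hL]
    by_cases h1t : dnfSat F' (cmb θ x (fun _ => true) η)
    · by_cases h0f : dnfSat F' (cmb θ x (fun _ => false) η)
      · have hg1 : ∀ ξ, g ξ = 1 := fun ξ => by
          simp only [hg]; exact dnfInd_pos (hmono_dn h0f ξ)
        have hR1 : (∑ ξ : {x' : X' // θ x' = x} → Bool,
            (∏ s : {x' : X' // θ x' = x}, (if ξ s = true then p x else 1 - p x)) * g ξ)
            = 1 := by
          rw [Finset.sum_congr rfl fun ξ _ => by rw [hg1 ξ, mul_one]]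
          have h2 : (∑ ξ : {x' : X' // θ x' = x} → Bool,
              ∏ s : {x' : X' // θ x' = x}, (if ξ s = true then p x else 1 - p x))
              = ∏ s : {x' : X' // θ x' = x},
                ((if (true : Bool) = true then p x else 1 - p x)
                  + (if (false : Bool) = true then p x else 1 - p x)) :=
            sum_pi_bool_prod (fun _ b => if b = true then p x else 1 - p x)
          rw [h2]
          rw [Finset.prod_congr rfl fun s _ =>
            (show (if (true : Bool) = true then p x else 1 - p x)
              + (if (false : Bool) = true then p x else 1 - p x) = (1 : ℝ) by norm_num)]
          exact Finset.prod_const_one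
        rw [hR1, hg1 (fun _ => true), hg1 (fun _ => false)]
        linarith
      · have hgt : g (fun _ => true) = 1 := by
          simp only [hg]; exact dnfInd_pos h1t
        have hgf : g (fun _ => false) = 0 := by
          simp only [hg]; exact dnfInd_neg h0f
        rw [hgt, hgf]
        obtain ⟨T', hTprime, hTsat⟩ := exists_prime_of_sat F' _ h1t
        have hinj := hprime T' hTprime
        have hex : ∃ x'₀ ∈ T', θ x'₀ = x := by
          by_contra hc
          push_neg at hc
          refine h0f ⟨T', hTprime.1, fun x' hx' => ?_⟩
          rw [hoff (fun _ => false) x' (hc x' hx')]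
          rw [← hoff (fun _ => true) x' (hc x' hx')]
          exact hTsat x' hx'
        obtain ⟨x'₀, hx'₀T, hθ₀⟩ := hex
        have huniq : ∀ x' ∈ T', θ x' = x → x' = x'₀ := fun x' hx' hθ' =>
          hinj hx' hx'₀T (by rw [hθ', hθ₀])
        set s₀ : {x' : X' // θ x' = x} := ⟨x'₀, hθ₀⟩ with hs₀
        have hgs : ∀ ξ, ξ s₀ = true → g ξ = 1 := by
          intro ξ hξ
          simp only [hg]
          refine dnfInd_pos ⟨T', hTprime.1, fun x' hx' => ?_⟩
          by_cases h : θ x' = x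
          · have hx'e : x' = x'₀ := huniq x' hx' h
            subst hx'e
            have : cmb θ x ξ η x' = ξ s₀ := by
              simp only [cmb]; rw [dif_pos h]
            rw [this, hξ]
          · rw [hoff ξ x' h, ← hoff (fun _ => true) x' h]
            exact hTsat x' hx'
        have hb : ∀ ξ : {x' : X' // θ x' = x} → Bool,
            (∏ s : {x' : X' // θ x' = x}, (if ξ s = true then p x else 1 - p x)) *
              (if ξ s₀ = true then 1 else 0)
              ≤ (∏ s : {x' : X' // θ x' = x}, (if ξ s = true then p x else 1 - p x)) * g ξ := by
          intro ξ
          by_cases h : ξ s₀ = true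
          · rw [if_pos h, hgs ξ h]
          · rw [if_neg h, mul_zero]
            exact mul_nonneg (hival0 ξ) (dnfInd_nonneg F' _)
        have hsum2 : (∑ ξ : {x' : X' // θ x' = x} → Bool,
            (∏ s : {x' : X' // θ x' = x}, (if ξ s = true then p x else 1 - p x)) *
              (if ξ s₀ = true then 1 else 0)) = p x := by
          have he : ∀ ξ : {x' : X' // θ x' = x} → Bool,
              (∏ s : {x' : X' // θ x' = x}, (if ξ s = true then p x else 1 - p x)) *
                (if ξ s₀ = true then 1 else 0)
              = ∏ s : {x' : X' // θ x' = x},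
                ((if ξ s = true then p x else 1 - p x) *
                  (if s = s₀ then (if ξ s = true then (1 : ℝ) else 0) else 1)) := by
            intro ξ
            rw [Finset.prod_mul_distrib]
            congr 1
            rw [Finset.prod_ite_eq' Finset.univ s₀ (fun s => if ξ s = true then (1 : ℝ) else 0)]
            simp
          rw [Finset.sum_congr rfl fun ξ _ => he ξ]
          have h2 : (∑ ξ : {x' : X' // θ x' = x} → Bool,
              ∏ s : {x' : X' // θ x' = x},
                ((if ξ s = true then p x else 1 - p x) *
                  (if s = s₀ then (if ξ s = true then (1 : ℝ) else 0) else 1)))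
              = ∏ s : {x' : X' // θ x' = x},
                (((if (true : Bool) = true then p x else 1 - p x) *
                  (if s = s₀ then (if (true : Bool) = true then (1 : ℝ) else 0) else 1))
                + ((if (false : Bool) = true then p x else 1 - p x) *
                  (if s = s₀ then (if (false : Bool) = true then (1 : ℝ) else 0) else 1))) :=
            sum_pi_bool_prod (fun s b => (if b = true then p x else 1 - p x) *
              (if s = s₀ then (if b = true then (1 : ℝ) else 0) else 1))
          rw [h2]
          have h3 : ∀ s : {x' : X' // θ x' = x},
              (((if (true : Bool) = true then p x else 1 - p x) *
                  (if s = s₀ then (if (true : Bool) = true then (1 : ℝ) else 0) else 1))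
                + ((if (false : Bool) = true then p x else 1 - p x) *
                  (if s = s₀ then (if (false : Bool) = true then (1 : ℝ) else 0) else 1)))
              = if s = s₀ then p x else 1 := by
            intro s
            by_cases h : s = s₀ <;> simp [h] <;> ring
          rw [Finset.prod_congr rfl fun s _ => h3 s]
          rw [Finset.prod_ite_eq' Finset.univ s₀ (fun _ => p x)]
          simp
        calc p x * 1 + (1 - p x) * 0 = p x := by ring
          _ = _ := hsum2.symm
          _ ≤ _ := Finset.sum_le_sum fun ξ _ => hb ξ
    · have hg0 : ∀ ξ, g ξ = 0 := fun ξ => by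
        simp only [hg]; exact dnfInd_neg fun hs => h1t (hmono_up ξ hs)
      rw [hg0 (fun _ => true), hg0 (fun _ => false)]
      rw [Finset.sum_congr rfl fun ξ _ => by rw [hg0 ξ, mul_zero]]
      simp
  calc (∑ ξ : {x' : X' // θ x' = x} → Bool,
        (∏ y : X, blockW p θ W y (cmb θ x ξ η)) * g ξ)
      = Rest * ∑ ξ : {x' : X' // θ x' = x} → Bool,
          (p x * (if ξ = (fun _ => true) then 1 else 0)
            + (1 - p x) * (if ξ = (fun _ => false) then 1 else 0)) * g ξ := by
        rw [Finset.mul_sum]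
        refine Finset.sum_congr rfl fun ξ _ => ?_
        rw [hsplit W hWiff ξ, hcoupled ξ]; ring
    _ ≤ Rest * ∑ ξ : {x' : X' // θ x' = x} → Bool,
          (∏ s : {x' : X' // θ x' = x}, (if ξ s = true then p x else 1 - p x)) * g ξ :=
        mul_le_mul_of_nonneg_left hkey hRest0
    _ = ∑ ξ : {x' : X' // θ x' = x} → Bool,
          (∏ y : X, blockW p θ (insert x W) y (cmb θ x ξ η)) * g ξ := by
        rw [Finset.mul_sum]
        refine (Finset.sum_congr rfl fun ξ _ => ?_).symm
        rw [hsplit (insert x W) hWiff' ξ, hindep ξ]; ring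

end DissMain

/-- Oblivious DNF upper bound.  Let `F` be a monotone DNF over the finite
variable set `X` with probabilities `p : X → [0,1]`, and let `F'` (over `X'`) be a
dissociation of `F` through the substitution `θ : X' → X` (i.e. `F'[θ] = F`) such that no
two distinct dissociations of a variable occur in the same prime implicant of `F'`.
Then `P[F] ≤ P[F']`, where `p'(X') = p(θ(X'))`. -/
theorem dnf_dissociation_upper_bound
    {X X' : Type*} [Fintype X] [Fintype X']
    (p : X → ℝ) (hp : ∀ x : X, 0 ≤ p x ∧ p x ≤ 1)
    (F : Finset (Finset X)) (F' : Finset (Finset X')) (θ : X' → X)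
    (hsubst : F'.image (Finset.image θ) = F)
    (hprime : ∀ T' : Finset X', IsPrimeImplicant F' T' → Set.InjOn θ ↑T') :
    dnfProb p F ≤ dnfProb (fun x' => p (θ x')) F' := by
  classical
  have key : ∀ W : Finset X, Qfun p θ F' ∅ ≤ Qfun p θ F' W := by
    intro W
    induction W using Finset.induction_on with
    | empty => exact le_refl _
    | @insert a s ha ih => exact le_trans ih (Q_step p hp θ F' hprime s a ha)
  calc dnfProb p F = Qfun p θ F' ∅ := (Q_empty p θ F F' hsubst).symm
    _ ≤ Qfun p θ F' Finset.univ := key Finset.univ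
    _ = dnfProb (fun x' => p (θ x')) F' := Q_univ p θ F'


end

end PDB
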